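/- Let N ≥ 3 and let σ_N denote the (N−1)-dimensional surface measure of the unit sphere of ℝ^N. Let V : (0,∞) → [0,+∞] be measurable, let R > 0 and γ₀ ≥ 2 be such that V(r) < +∞ for almost every r ∈ (0,R) and λ₀ := essinf_{r∈(0,R)} r^{γ₀} V(r) > 0. Then every radially symmetric function u ∈ C¹(ℝ^N) with ∫_{ℝ^N} |∇u|² dx < ∞ and ∫_{ℝ^N} V(|x|) u(x)² dx < ∞ satisfies |u(x)| ≤ √(max{2, N−2}/σ_N) · ( λ₀^{−1/2} + R^{(γ₀−2)/2} λ₀^{−1} )^{1/2} · ‖u‖_V · |x|^{−(2N−2−γ₀)/4} for every x with 0 < |x| < R. -/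

import Mathlib

open MeasureTheory Filter Set
open scoped ENNReal

local notation "dim" => Module.finrank ℝ

open Metric in
theorem my_lintegral_fun_norm_addHaar {E : Type*} [NormedAddCommGroup E] [NormedSpace ℝ E]
    [MeasurableSpace E] [BorelSpace E] [FiniteDimensional ℝ E] [Nontrivial E]
    (μ : Measure E) [μ.IsAddHaarMeasure] (f : ℝ → ℝ≥0∞) (hf : Measurable f) :
    ∫⁻ x, f ‖x‖ ∂μ = (dim E : ℝ≥0∞) * μ (ball 0 1) *
      ∫⁻ y in Ioi (0 : ℝ), ENNReal.ofReal (y ^ (dim E - 1)) * f y := by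
  have h1 : ∫⁻ x, f ‖x‖ ∂μ = ∫⁻ x : ({(0)}ᶜ : Set E), f ‖x.1‖ ∂(μ.comap (↑)) := by
    rw [lintegral_subtype_comap (measurableSet_singleton _).compl fun x => f ‖x‖,
      MeasureTheory.restrict_compl_singleton]
  rw [h1]
  have hfm : Measurable (fun p : sphere (0:E) 1 × Ioi (0:ℝ) => f p.2) :=
    hf.comp (measurable_subtype_coe.comp measurable_snd)
  have h2 := (μ.measurePreserving_homeomorphUnitSphereProd).lintegral_comp
    (f := fun p : sphere (0:E) 1 × Ioi (0:ℝ) => f p.2) hfm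
  simp only [homeomorphUnitSphereProd_apply_snd_coe] at h2
  rw [h2, lintegral_prod (fun p : sphere (0:E) 1 × Ioi (0:ℝ) => f p.2) hfm.aemeasurable]
  have h3 : (∫⁻ y : Ioi (0:ℝ), f y ∂(Measure.volumeIoiPow (dim E - 1)))
      = ∫⁻ y in Ioi (0:ℝ), ENNReal.ofReal (y ^ (dim E - 1)) * f y := by
    rw [Measure.volumeIoiPow,
      lintegral_withDensity_eq_lintegral_mul _
        (f := fun r : Ioi (0:ℝ) => ENNReal.ofReal (r.1 ^ (dim E - 1)))
        ((measurable_subtype_coe.pow_const _).ennreal_ofReal)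
        (g := fun y : Ioi (0:ℝ) => f y.1) (hf.comp measurable_subtype_coe)]
    rw [show (fun a : Ioi (0:ℝ) => ((fun r : Ioi (0:ℝ) => ENNReal.ofReal (r.1 ^ (dim E - 1))) *
        fun y : Ioi (0:ℝ) => f y.1) a) = fun a : Ioi (0:ℝ) =>
        (fun y : ℝ => ENNReal.ofReal (y ^ (dim E - 1)) * f y) a.1 from rfl]
    rw [lintegral_subtype_comap measurableSet_Ioi (fun y : ℝ => ENNReal.ofReal (y ^ (dim E - 1)) * f y)]
  rw [lintegral_congr (fun x => h3), lintegral_const, Measure.toSphere_apply_univ, mul_comm]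

open Metric in
lemma radial_fderiv_norm_eq {E : Type*} [NormedAddCommGroup E] [InnerProductSpace ℝ E]
    [FiniteDimensional ℝ E] {u : E → ℝ} (hu : Differentiable ℝ u) {w : ℝ → ℝ}
    (hw : ∀ z, u z = w ‖z‖) {x y : E} (h : ‖x‖ = ‖y‖) :
    ‖fderiv ℝ u x‖ = ‖fderiv ℝ u y‖ := by
  set A := Submodule.reflection (ℝ ∙ (x - y))ᗮ with hA
  have hAx : A x = y := Submodule.reflection_sub h
  have hcomp : u ∘ A = u := funext fun z => by
    simp only [Function.comp_apply, hw, A.norm_map]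
  have hAd : HasFDerivAt (⇑A) (A.toContinuousLinearEquiv : E →L[ℝ] E) x := by
    have := (A.toContinuousLinearEquiv).hasFDerivAt (x := x)
    simpa using this
  have h1 : fderiv ℝ u x = (fderiv ℝ u (A x)).comp (A.toContinuousLinearEquiv : E →L[ℝ] E) := by
    have h2 := ((hu (A x)).hasFDerivAt.comp x hAd)
    rw [hcomp] at h2
    exact h2.fderiv
  have h3 : (A.toContinuousLinearEquiv : E →L[ℝ] E)
      = A.toLinearIsometry.toContinuousLinearMap := by
    ext z; rfl
  rw [h1, hAx, ContinuousLinearMap.opNorm_comp_linearIsometryEquiv]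

/-- `σ_N`, the (N−1)-dimensional surface measure of the unit sphere of `ℝ^N`,
equals `N` times the Lebesgue volume of the unit ball. -/
noncomputable def sphereSurfaceMeasure (N : ℕ) : ℝ :=
  (N : ℝ) * (volume (Metric.ball (0 : EuclideanSpace ℝ (Fin N)) 1)).toReal

set_option maxHeartbeats 1000000 in
theorem radial_estimate_at_origin
    (N : ℕ) (hN : 3 ≤ N)
    (V : ℝ → ℝ≥0∞) (hVmeas : Measurable V)
    (R γ : ℝ) (hR : 0 < R) (hγ : 2 ≤ γ)
    (hVfin : ∀ᵐ r ∂(volume.restrict (Set.Ioo 0 R)), V r < ⊤)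
    (lam : ℝ≥0∞)
    (hlam : lam = essInf (fun r : ℝ => ENNReal.ofReal (r ^ γ) * V r)
      (volume.restrict (Set.Ioo 0 R)))
    (hlampos : 0 < lam)
    (u : EuclideanSpace ℝ (Fin N) → ℝ) (hu : ContDiff ℝ 1 u)
    (hrad : ∃ w : ℝ → ℝ, ∀ x, u x = w ‖x‖)
    (hgrad : Integrable (fun x : EuclideanSpace ℝ (Fin N) => ‖fderiv ℝ u x‖ ^ 2))
    (hVu : (∫⁻ x : EuclideanSpace ℝ (Fin N), V ‖x‖ * ENNReal.ofReal ((u x) ^ 2)) < ⊤) :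
    ∀ x : EuclideanSpace ℝ (Fin N), 0 < ‖x‖ → ‖x‖ < R →
      |u x| ≤ Real.sqrt (max 2 ((N : ℝ) - 2) / sphereSurfaceMeasure N) *
        Real.sqrt (lam.toReal ^ (-(1 / 2 : ℝ)) + R ^ ((γ - 2) / 2) * lam.toReal⁻¹) *
        Real.sqrt ((∫ x : EuclideanSpace ℝ (Fin N), ‖fderiv ℝ u x‖ ^ 2) +
          (∫⁻ x : EuclideanSpace ℝ (Fin N), V ‖x‖ * ENNReal.ofReal ((u x) ^ 2)).toReal) *
        ‖x‖ ^ (-(2 * (N : ℝ) - 2 - γ) / 4) := by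
  classical
  haveI hNE : Nontrivial (EuclideanSpace ℝ (Fin N)) := by
    refine nontrivial_of_ne (EuclideanSpace.single (⟨0, by omega⟩ : Fin N) (1:ℝ)) 0 ?_
    intro h
    have h2 := congrArg (fun z : EuclideanSpace ℝ (Fin N) => ‖z‖) h
    simp only [EuclideanSpace.norm_single, norm_one, norm_zero] at h2
    exact one_ne_zero h2
  have hudiff : Differentiable ℝ u := hu.differentiable one_ne_zero
  obtain ⟨w₀, hw₀⟩ := hrad
  -- the radial profile
  set e : EuclideanSpace ℝ (Fin N) := EuclideanSpace.single (⟨0, by omega⟩ : Fin N) (1:ℝ) with he_def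
  have he : ‖e‖ = 1 := by rw [he_def, EuclideanSpace.norm_single]; norm_num
  set w : ℝ → ℝ := fun t => u (t • e) with hw_def
  have hw_eq : ∀ z : EuclideanSpace ℝ (Fin N), u z = w ‖z‖ := by
    intro z
    have h1 : ‖(‖z‖ : ℝ) • e‖ = ‖z‖ := by
      rw [norm_smul, he, mul_one, Real.norm_eq_abs, abs_of_nonneg (norm_nonneg z)]
    simp only [hw_def]
    rw [hw₀ z, hw₀ ((‖z‖ : ℝ) • e), h1]
  have hwcont : Continuous w := hudiff.continuous.comp (continuous_id.smul continuous_const)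
  -- derivative of the profile
  set W' : ℝ → ℝ := fun t => (fderiv ℝ u (t • e)) e with hW'_def
  have hder : ∀ t : ℝ, HasDerivAt w (W' t) t := by
    intro t
    have hsm : HasDerivAt (fun s : ℝ => s • e) ((1:ℝ) • e) t := (hasDerivAt_id t).smul_const e
    rw [one_smul] at hsm
    exact (hudiff (t • e)).hasFDerivAt.comp_hasDerivAt t hsm
  have hW'cont : Continuous W' :=
    ((hu.continuous_fderiv one_ne_zero).comp (continuous_id.smul continuous_const)).clm_apply
      continuous_const
  -- gradient comparison
  set G : ℝ → ℝ := fun t => ‖fderiv ℝ u (t • e)‖ ^ 2 with hG_def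
  have hGcont : Continuous G :=
    (((hu.continuous_fderiv one_ne_zero).comp (continuous_id.smul continuous_const)).norm).pow 2
  have hWle : ∀ t : ℝ, W' t ^ 2 ≤ G t := by
    intro t
    have h1 : |W' t| ≤ ‖fderiv ℝ u (t • e)‖ := by
      calc |W' t| = ‖(fderiv ℝ u (t • e)) e‖ := (Real.norm_eq_abs _).symm
      _ ≤ ‖fderiv ℝ u (t • e)‖ * ‖e‖ := ContinuousLinearMap.le_opNorm _ _
      _ = ‖fderiv ℝ u (t • e)‖ := by rw [he, mul_one]
    calc W' t ^ 2 = |W' t| ^ 2 := (sq_abs _).symm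
    _ ≤ ‖fderiv ℝ u (t • e)‖ ^ 2 := by
        exact pow_le_pow_left₀ (abs_nonneg _) h1 2
  have hradG : ∀ z : EuclideanSpace ℝ (Fin N), ‖fderiv ℝ u z‖ ^ 2 = G ‖z‖ := by
    intro z
    have h1 : ‖z‖ = ‖(‖z‖ : ℝ) • e‖ := by
      rw [norm_smul, he, mul_one, Real.norm_eq_abs, abs_of_nonneg (norm_nonneg z)]
    rw [hG_def]
    simp only
    rw [radial_fderiv_norm_eq hudiff hw_eq h1]
  -- surface measure positivity
  have hvb_lt : volume (Metric.ball (0 : EuclideanSpace ℝ (Fin N)) 1) < ⊤ := measure_ball_lt_top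
  have hvb_pos : 0 < volume (Metric.ball (0 : EuclideanSpace ℝ (Fin N)) 1) :=
    Metric.measure_ball_pos _ _ one_pos
  have hσpos : 0 < sphereSurfaceMeasure N := by
    rw [sphereSurfaceMeasure]
    apply mul_pos
    · have : (0:ℕ) < N := by omega
      exact_mod_cast this
    · exact ENNReal.toReal_pos hvb_pos.ne' hvb_lt.ne
  set σ' : ℝ≥0∞ := (N : ℝ≥0∞) * volume (Metric.ball (0 : EuclideanSpace ℝ (Fin N)) 1)
    with hσ'_def
  have hσ'_eq : ENNReal.ofReal (sphereSurfaceMeasure N) = σ' := by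
    rw [sphereSurfaceMeasure, ENNReal.ofReal_mul (by positivity), ENNReal.ofReal_natCast,
      ENNReal.ofReal_toReal hvb_lt.ne]
  have hσ'_ne_top : σ' ≠ ⊤ := by
    rw [hσ'_def]
    exact ENNReal.mul_ne_top (ENNReal.natCast_ne_top N) hvb_lt.ne
  have hσ'_ne_zero : σ' ≠ 0 := by
    rw [← hσ'_eq]
    simp only [ne_eq, ENNReal.ofReal_eq_zero, not_le]
    exact hσpos
  -- polar coordinates for the gradient term
  set A' : ℝ := ∫ x : EuclideanSpace ℝ (Fin N), ‖fderiv ℝ u x‖ ^ 2 with hA'_def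
  have hA'nonneg : 0 ≤ A' := integral_nonneg fun x => by positivity
  set Bℒ : ℝ≥0∞ := ∫⁻ x : EuclideanSpace ℝ (Fin N), V ‖x‖ * ENNReal.ofReal ((u x) ^ 2)
    with hBℒ_def
  set B' : ℝ := Bℒ.toReal with hB'_def
  have hB'nonneg : 0 ≤ B' := ENNReal.toReal_nonneg
  have hBℒ_eq : Bℒ = ENNReal.ofReal B' := (ENNReal.ofReal_toReal hVu.ne).symm
  have P1 : ENNReal.ofReal A' =
      σ' * ∫⁻ y in Ioi (0:ℝ), ENNReal.ofReal (y ^ (N - 1)) * ENNReal.ofReal (G y) := by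
    have h0 : ENNReal.ofReal A' =
        ∫⁻ x : EuclideanSpace ℝ (Fin N), ENNReal.ofReal (‖fderiv ℝ u x‖ ^ 2) :=
      ofReal_integral_eq_lintegral_ofReal hgrad (ae_of_all _ fun x => by positivity)
    have h1 : (fun x : EuclideanSpace ℝ (Fin N) => ENNReal.ofReal (‖fderiv ℝ u x‖ ^ 2))
        = fun x => (fun y => ENNReal.ofReal (G y)) ‖x‖ := funext fun z => by rw [hradG z]
    rw [h0, h1, my_lintegral_fun_norm_addHaar volume _ hGcont.measurable.ennreal_ofReal,
      finrank_euclideanSpace_fin]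
  set f2 : ℝ → ℝ≥0∞ := fun y => V y * ENNReal.ofReal (w y ^ 2) with hf2_def
  have hf2meas : Measurable f2 := hVmeas.mul ((hwcont.pow 2).measurable.ennreal_ofReal)
  have P2 : Bℒ = σ' * ∫⁻ y in Ioi (0:ℝ), ENNReal.ofReal (y ^ (N - 1)) * f2 y := by
    have h1 : (fun x : EuclideanSpace ℝ (Fin N) => V ‖x‖ * ENNReal.ofReal ((u x) ^ 2))
        = fun x => f2 ‖x‖ := funext fun z => by rw [hf2_def]; simp only; rw [hw_eq z]
    rw [hBℒ_def, h1, my_lintegral_fun_norm_addHaar volume f2 hf2meas,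
      finrank_euclideanSpace_fin]
  -- facts about lam
  have hVlow : ∀ᵐ y ∂(volume.restrict (Ioo (0:ℝ) R)),
      lam ≤ ENNReal.ofReal (y ^ γ) * V y := by
    rw [hlam]
    exact ae_essInf_le
  have hlam_ne_top : lam ≠ ⊤ := by
    have hne : (volume.restrict (Ioo (0:ℝ) R)) ≠ 0 := by
      intro h0
      have h1 : (volume.restrict (Ioo (0:ℝ) R)) univ = 0 := by rw [h0]; simp
      rw [Measure.restrict_apply_univ, Real.volume_Ioo] at h1
      rw [ENNReal.ofReal_eq_zero] at h1
      linarith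
    haveI : (ae (volume.restrict (Ioo (0:ℝ) R))).NeBot := ae_neBot.2 hne
    obtain ⟨y, hy1, hy2⟩ := (hVlow.and hVfin).exists
    exact ((hy1.trans_lt (ENNReal.mul_lt_top ENNReal.ofReal_lt_top hy2)).ne)
  set lam0 : ℝ := lam.toReal with hlam0_def
  have hlam0pos : 0 < lam0 := ENNReal.toReal_pos hlampos.ne' hlam_ne_top
  have hlam_eq : lam = ENNReal.ofReal lam0 := (ENNReal.ofReal_toReal hlam_ne_top).symm
  -- 1-D quantities
  set α : ℝ := (2 * (N:ℝ) - 2 - γ) / 2 with hα_def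
  set g1 : ℝ → ℝ := fun t => t ^ ((N:ℝ) - 1) * W' t ^ 2 with hg1_def
  set g2 : ℝ → ℝ := fun t => t ^ ((N:ℝ) - 1 - γ) * w t ^ 2 with hg2_def
  have hNcast : ((N - 1 : ℕ) : ℝ) = (N:ℝ) - 1 := by
    have : (1:ℕ) ≤ N := by omega
    push_cast [this]
    ring
  have hrpow_pow : ∀ y : ℝ, 0 < y → y ^ ((N:ℝ) - 1) = y ^ (N - 1) := by
    intro y hy
    rw [← hNcast, Real.rpow_natCast]
  -- pointwise bound relating g2 to the potential term
  have hg2le : ∀ᵐ y ∂(volume.restrict (Ioo (0:ℝ) R)),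
      lam * ENNReal.ofReal (g2 y) ≤ ENNReal.ofReal (y ^ (N - 1)) * f2 y := by
    filter_upwards [hVlow, ae_restrict_mem measurableSet_Ioo] with y hV hy
    calc lam * ENNReal.ofReal (g2 y) ≤ (ENNReal.ofReal (y ^ γ) * V y) * ENNReal.ofReal (g2 y) :=
      mul_le_mul_left hV _
    _ = V y * (ENNReal.ofReal (y ^ γ) * ENNReal.ofReal (g2 y)) := by ring
    _ = V y * ENNReal.ofReal (y ^ γ * g2 y) := by
        rw [ENNReal.ofReal_mul (Real.rpow_nonneg hy.1.le γ)]
    _ = ENNReal.ofReal (y ^ (N - 1)) * f2 y := by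
        have harith : y ^ γ * g2 y = y ^ (N - 1) * w y ^ 2 := by
          rw [hg2_def]
          simp only
          rw [← mul_assoc, ← Real.rpow_add hy.1]
          have hexp : γ + ((N:ℝ) - 1 - γ) = (N:ℝ) - 1 := by ring
          rw [hexp, hrpow_pow y hy.1]
        rw [harith, hf2_def, ENNReal.ofReal_mul (pow_nonneg hy.1.le _)]
        ring
  -- continuity of 1-D integrands
  have hrpow_contOn : ∀ p : ℝ, ContinuousOn (fun t : ℝ => t ^ p) (Ioi (0:ℝ)) :=
    fun p t ht => (Real.continuousAt_rpow_const t p (Or.inl (ne_of_gt ht))).continuousWithinAt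
  have hg1cont : ContinuousOn g1 (Ioi (0:ℝ)) :=
    (hrpow_contOn _).mul ((hW'cont.pow 2).continuousOn)
  have hg2cont : ContinuousOn g2 (Ioi (0:ℝ)) :=
    (hrpow_contOn _).mul ((hwcont.pow 2).continuousOn)
  -- bound for the gradient part
  have hT1 : ∀ s r' : ℝ, 0 < s → s ≤ r' →
      ∫ t in s..r', g1 t ≤ A' / sphereSurfaceMeasure N := by
    intro s r' hs hsr
    have hsub : Icc s r' ⊆ Ioi (0:ℝ) := fun t ht => lt_of_lt_of_le hs ht.1
    have hint : IntegrableOn g1 (Ioo s r') :=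
      ((hg1cont.mono hsub).integrableOn_Icc).mono_set Ioo_subset_Icc_self
    have hofT : ENNReal.ofReal (∫ t in s..r', g1 t) = ∫⁻ t in Ioo s r', ENNReal.ofReal (g1 t) := by
      rw [intervalIntegral.integral_of_le hsr, integral_Ioc_eq_integral_Ioo]
      exact ofReal_integral_eq_lintegral_ofReal hint
        ((ae_restrict_mem measurableSet_Ioo).mono (fun t ht =>
          mul_nonneg (Real.rpow_nonneg (hs.trans ht.1).le _) (sq_nonneg _)))
    have hstep : (∫⁻ t in Ioo s r', ENNReal.ofReal (g1 t)) ≤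
        ∫⁻ y in Ioi (0:ℝ), ENNReal.ofReal (y ^ (N - 1)) * ENNReal.ofReal (G y) := by
      refine le_trans (lintegral_mono_ae ((ae_restrict_mem measurableSet_Ioo).mono ?_))
        (lintegral_mono_set (fun t ht => hs.trans ht.1))
      intro t ht
      have ht0 : 0 < t := hs.trans ht.1
      rw [← ENNReal.ofReal_mul (pow_nonneg ht0.le _)]
      apply ENNReal.ofReal_le_ofReal
      rw [hg1_def]
      simp only
      rw [hrpow_pow t ht0]
      exact mul_le_mul_of_nonneg_left (hWle t) (pow_nonneg ht0.le _)
    have h2 : ENNReal.ofReal (sphereSurfaceMeasure N * ∫ t in s..r', g1 t) ≤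
        ENNReal.ofReal A' := by
      rw [ENNReal.ofReal_mul hσpos.le, hσ'_eq, P1]
      exact mul_le_mul_right (hofT ▸ hstep) σ'
    have h3 := (ENNReal.ofReal_le_ofReal_iff hA'nonneg).1 h2
    rw [le_div_iff₀ hσpos]
    linarith
  -- bound for the potential part
  have hQ : (∫⁻ y in Ioi (0:ℝ), ENNReal.ofReal (y ^ (N - 1)) * f2 y) ≠ ⊤ := by
    intro htop
    rw [P2, htop, ENNReal.mul_top hσ'_ne_zero] at hVu
    exact (lt_irrefl _ hVu)
  have hT2core : ∀ s r' : ℝ, s ≤ r' → Ioo s r' ⊆ Ioo (0:ℝ) R →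
      lam * (∫⁻ t in Ioo s r', ENNReal.ofReal (g2 t)) ≤
        ∫⁻ y in Ioi (0:ℝ), ENNReal.ofReal (y ^ (N - 1)) * f2 y := by
    intro s r' hsr hsub
    rw [← lintegral_const_mul' lam _ hlam_ne_top]
    refine le_trans (lintegral_mono_ae (ae_restrict_of_ae_restrict_of_subset hsub hg2le))
      (lintegral_mono_set (fun t ht => (hsub ht).1))
  have hT2 : ∀ s r' : ℝ, 0 < s → s ≤ r' → r' ≤ R →
      ∫ t in s..r', g2 t ≤ B' / (sphereSurfaceMeasure N * lam0) := by
    intro s r' hs hsr hr'R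
    have hsub : Icc s r' ⊆ Ioi (0:ℝ) := fun t ht => lt_of_lt_of_le hs ht.1
    have hsub2 : Ioo s r' ⊆ Ioo (0:ℝ) R := fun t ht => ⟨hs.trans ht.1, ht.2.trans_le hr'R⟩
    have hint : IntegrableOn g2 (Ioo s r') :=
      ((hg2cont.mono hsub).integrableOn_Icc).mono_set Ioo_subset_Icc_self
    have hofT : ENNReal.ofReal (∫ t in s..r', g2 t) = ∫⁻ t in Ioo s r', ENNReal.ofReal (g2 t) := by
      rw [intervalIntegral.integral_of_le hsr, integral_Ioc_eq_integral_Ioo]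
      exact ofReal_integral_eq_lintegral_ofReal hint
        ((ae_restrict_mem measurableSet_Ioo).mono (fun t ht =>
          mul_nonneg (Real.rpow_nonneg (hs.trans ht.1).le _) (sq_nonneg _)))
    have h2 : ENNReal.ofReal (sphereSurfaceMeasure N * (lam0 * ∫ t in s..r', g2 t)) ≤
        ENNReal.ofReal B' := by
      rw [ENNReal.ofReal_mul hσpos.le, ENNReal.ofReal_mul hlam0pos.le, hσ'_eq, ← hlam_eq,
        ← hBℒ_eq, P2, hofT]
      exact mul_le_mul_right (hT2core s r' hsr hsub2) σ'
    have h3 := (ENNReal.ofReal_le_ofReal_iff hB'nonneg).1 h2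
    rw [le_div_iff₀ (mul_pos hσpos hlam0pos)]
    linarith
  -- finiteness of the weighted L² norm of w
  have hJ2fin : (∫⁻ t in Ioo (0:ℝ) R, ENNReal.ofReal (g2 t)) ≠ ⊤ := by
    intro htop
    have h1 := hT2core 0 R hR.le subset_rfl
    rw [htop, ENNReal.mul_top hlampos.ne'] at h1
    exact hQ (top_le_iff.1 h1)
  -- existence of good boundary points
  have hexists : ∀ ε : ℝ, 0 < ε → ∀ r' : ℝ, 0 < r' → r' ≤ R →
      ∃ s, s ∈ Ioo (0:ℝ) r' ∧ w s ^ 2 * s ^ α < ε := by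
    intro ε hε r' hr'0 hr'R
    by_contra hcon
    push_neg at hcon
    have hpt : ∀ t ∈ Ioo (0:ℝ) r', ε * t ^ (-γ/2) ≤ g2 t := by
      intro t ht
      have ht0 : 0 < t := ht.1
      have h1 := hcon t ht
      have h2 : (w t ^ 2 * t ^ α) * t ^ (-γ/2) = g2 t := by
        rw [hg2_def]; simp only
        rw [mul_assoc, ← Real.rpow_add ht0]
        have hexp : α + (-γ/2) = (N:ℝ) - 1 - γ := by rw [hα_def]; ring
        rw [hexp]; ring
      calc ε * t ^ (-γ/2) ≤ (w t ^ 2 * t ^ α) * t ^ (-γ/2) :=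
        mul_le_mul_of_nonneg_right h1 (Real.rpow_nonneg ht0.le _)
      _ = g2 t := h2
    have hni : ¬ IntegrableOn (fun t : ℝ => t ^ (-γ/2)) (Ioo 0 r') := by
      rw [intervalIntegral.integrableOn_Ioo_rpow_iff hr'0]
      intro hcon2
      linarith
    have hmeas : AEStronglyMeasurable (fun t : ℝ => t ^ (-γ/2))
        (volume.restrict (Ioo (0:ℝ) r')) :=
      ((hrpow_contOn (-γ/2)).mono (fun t ht => ht.1)).aestronglyMeasurable measurableSet_Ioo
    have htopint : (∫⁻ t in Ioo (0:ℝ) r', ENNReal.ofReal (t ^ (-γ/2))) = ⊤ := by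
      by_contra hne
      exact hni ((lintegral_ofReal_ne_top_iff_integrable hmeas
        ((ae_restrict_mem measurableSet_Ioo).mono
          (fun t ht => Real.rpow_nonneg ht.1.le _))).1 hne)
    have hchain : (⊤ : ℝ≥0∞) ≤ ∫⁻ t in Ioo (0:ℝ) R, ENNReal.ofReal (g2 t) := by
      calc (⊤:ℝ≥0∞) = ENNReal.ofReal ε * ∫⁻ t in Ioo (0:ℝ) r', ENNReal.ofReal (t ^ (-γ/2)) := by
            rw [htopint, ENNReal.mul_top (ENNReal.ofReal_pos.2 hε).ne']
      _ = ∫⁻ t in Ioo (0:ℝ) r', ENNReal.ofReal ε * ENNReal.ofReal (t ^ (-γ/2)) :=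
            (lintegral_const_mul' _ _ ENNReal.ofReal_ne_top).symm
      _ ≤ ∫⁻ t in Ioo (0:ℝ) r', ENNReal.ofReal (g2 t) := by
            refine lintegral_mono_ae ((ae_restrict_mem measurableSet_Ioo).mono ?_)
            intro t ht
            rw [← ENNReal.ofReal_mul hε.le]
            exact ENNReal.ofReal_le_ofReal (hpt t ht)
      _ ≤ _ := lintegral_mono_set (fun t (ht : t ∈ Ioo (0:ℝ) r') =>
            mem_Ioo.2 ⟨ht.1, lt_of_lt_of_le ht.2 hr'R⟩)
    exact hJ2fin (top_le_iff.1 hchain)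
  -- main pointwise estimate
  intro x hx0 hxR
  set r : ℝ := ‖x‖ with hr_def
  set M : ℝ := max 2 ((N:ℝ) - 2) with hM_def
  have hM2 : (2:ℝ) ≤ M := le_max_left _ _
  have hMN : (N:ℝ) - 2 ≤ M := le_max_right _ _
  have hNR : (3:ℝ) ≤ (N:ℝ) := by exact_mod_cast hN
  have hN2 : (0:ℝ) < (N:ℝ) - 2 := by linarith
  set c : ℝ := lam0 ^ (-(1/2:ℝ)) with hc_def
  have hcpos : 0 < c := Real.rpow_pos_of_pos hlam0pos _
  set Rg : ℝ := R ^ ((γ - 2)/2) with hRg_def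
  have hRgpos : 0 < Rg := Real.rpow_pos_of_pos hR _
  set K : ℝ := ((N:ℝ) - 2) * Rg with hK_def
  have hKpos : 0 < K := mul_pos hN2 hRgpos
  have hlam0inv : 0 < lam0⁻¹ := inv_pos.2 hlam0pos
  have hcc : c⁻¹ * lam0⁻¹ = c := by
    rw [hc_def, ← Real.rpow_neg_one lam0, ← Real.rpow_neg hlam0pos.le,
      ← Real.rpow_add hlam0pos]
    norm_num
  -- derivative of t ↦ w t ^ 2 * t ^ α
  set D : ℝ → ℝ := fun t => 2 * w t * W' t * t ^ α + w t ^ 2 * (α * t ^ (α - 1)) with hD_def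
  have hDeriv : ∀ t : ℝ, 0 < t → HasDerivAt (fun t => w t ^ 2 * t ^ α) (D t) t := by
    intro t ht
    have h1 : HasDerivAt (fun s => w s ^ 2) ((2:ℕ) * w t ^ 1 * W' t) t := (hder t).pow 2
    have h2 : HasDerivAt (fun t : ℝ => t ^ α) (α * t ^ (α - 1)) t :=
      Real.hasDerivAt_rpow_const (Or.inl ht.ne')
    have h3 := h1.mul h2
    refine h3.congr_deriv ?_
    rw [hD_def]
    simp only
    push_cast
    ring
  -- pointwise bound on the derivative
  have hDbound : ∀ s, s ∈ Ioo (0:ℝ) r → ∀ t, t ∈ Icc s r →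
      D t ≤ c * g1 t + (c⁻¹ + K) * g2 t := by
    intro s hs t ht
    have ht0 : 0 < t := lt_of_lt_of_le hs.1 ht.1
    have htR : t ≤ R := le_trans ht.2 hxR.le
    set X : ℝ := t ^ (((N:ℝ) - 1)/2) * |W' t| with hX_def
    set Y : ℝ := t ^ (((N:ℝ) - 1 - γ)/2) * |w t| with hY_def
    have hXnn : 0 ≤ X := mul_nonneg (Real.rpow_nonneg ht0.le _) (abs_nonneg _)
    have hYnn : 0 ≤ Y := mul_nonneg (Real.rpow_nonneg ht0.le _) (abs_nonneg _)
    have hX2 : X ^ 2 = g1 t := by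
      rw [hX_def, mul_pow, sq_abs, hg1_def]
      simp only
      congr 1
      rw [sq, ← Real.rpow_add ht0]
      congr 1
      ring
    have hY2 : Y ^ 2 = g2 t := by
      rw [hY_def, mul_pow, sq_abs, hg2_def]
      simp only
      congr 1
      rw [sq, ← Real.rpow_add ht0]
      congr 1
      ring
    have hXY : 2 * w t * W' t * t ^ α ≤ 2 * (X * Y) := by
      have h1 : X * Y = t ^ α * (|W' t| * |w t|) := by
        rw [hX_def, hY_def]
        rw [show t ^ (((N:ℝ) - 1)/2) * |W' t| * (t ^ (((N:ℝ) - 1 - γ)/2) * |w t|)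
          = (t ^ (((N:ℝ) - 1)/2) * t ^ (((N:ℝ) - 1 - γ)/2)) * (|W' t| * |w t|) from by ring,
          ← Real.rpow_add ht0]
        congr 2
        rw [hα_def]
        ring
      have h2 : w t * W' t ≤ |W' t| * |w t| := by
        calc w t * W' t ≤ |w t * W' t| := le_abs_self _
        _ = |W' t| * |w t| := by rw [abs_mul]; ring
      have h3 : 0 ≤ t ^ α := Real.rpow_nonneg ht0.le _
      calc 2 * w t * W' t * t ^ α = 2 * (t ^ α * (w t * W' t)) := by ring
      _ ≤ 2 * (t ^ α * (|W' t| * |w t|)) := by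
          have := mul_le_mul_of_nonneg_left h2 h3
          linarith
      _ = 2 * (X * Y) := by rw [h1]
    have hAM : 2 * (X * Y) ≤ c * X ^ 2 + c⁻¹ * Y ^ 2 := by
      have hnn : 0 ≤ c⁻¹ * (c * X - Y) ^ 2 :=
        mul_nonneg (inv_nonneg.2 hcpos.le) (sq_nonneg _)
      have hexp : c⁻¹ * (c * X - Y) ^ 2 = c * X ^ 2 - 2 * (X * Y) + c⁻¹ * Y ^ 2 := by
        have hinv : c⁻¹ * c = 1 := inv_mul_cancel₀ hcpos.ne'
        have : (c * X - Y) ^ 2 = c * (c * X ^ 2 - 2 * (X * Y)) + Y ^ 2 := by ring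
        rw [this, mul_add, ← mul_assoc, hinv, one_mul]
      linarith
    have hterm1 : 2 * w t * W' t * t ^ α ≤ c * g1 t + c⁻¹ * g2 t := by
      rw [← hX2, ← hY2]
      linarith
    have hterm2 : w t ^ 2 * (α * t ^ (α - 1)) ≤ K * g2 t := by
      rcases le_or_gt α 0 with hα0 | hα0
      · have h1 : α * t ^ (α - 1) ≤ 0 :=
          mul_nonpos_of_nonpos_of_nonneg hα0 (Real.rpow_nonneg ht0.le _)
        have h2 : w t ^ 2 * (α * t ^ (α - 1)) ≤ 0 :=
          mul_nonpos_of_nonneg_of_nonpos (sq_nonneg _) h1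
        have h3 : 0 ≤ K * g2 t := by
          apply mul_nonneg hKpos.le
          rw [← hY2]; exact sq_nonneg _
        linarith
      · have hαN : α ≤ (N:ℝ) - 2 := by rw [hα_def]; linarith
        have h1 : t ^ (α - 1) = t ^ ((γ-2)/2) * t ^ ((N:ℝ) - 1 - γ) := by
          rw [← Real.rpow_add ht0]
          congr 1
          rw [hα_def]
          ring
        have h2 : t ^ ((γ-2)/2) ≤ Rg := by
          rw [hRg_def]
          exact Real.rpow_le_rpow ht0.le htR (by linarith)
        have h3 : 0 ≤ t ^ ((N:ℝ) - 1 - γ) := Real.rpow_nonneg ht0.le _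
        have h4 : t ^ (α - 1) ≤ Rg * t ^ ((N:ℝ) - 1 - γ) := by
          rw [h1]
          exact mul_le_mul_of_nonneg_right h2 h3
        have h5 : 0 ≤ t ^ (α - 1) := Real.rpow_nonneg ht0.le _
        calc w t ^ 2 * (α * t ^ (α - 1)) ≤ w t ^ 2 * (((N:ℝ) - 2) * (Rg * t ^ ((N:ℝ) - 1 - γ))) := by
              apply mul_le_mul_of_nonneg_left _ (sq_nonneg _)
              calc α * t ^ (α - 1) ≤ ((N:ℝ) - 2) * t ^ (α - 1) :=
                mul_le_mul_of_nonneg_right hαN h5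
              _ ≤ ((N:ℝ) - 2) * (Rg * t ^ ((N:ℝ) - 1 - γ)) :=
                mul_le_mul_of_nonneg_left h4 (by linarith)
        _ = K * g2 t := by rw [hK_def, hg2_def]; simp only; ring
    calc D t = 2 * w t * W' t * t ^ α + w t ^ 2 * (α * t ^ (α - 1)) := by rw [hD_def]
    _ ≤ (c * g1 t + c⁻¹ * g2 t) + K * g2 t := add_le_add hterm1 hterm2
    _ = c * g1 t + (c⁻¹ + K) * g2 t := by ring
  have hrpos : 0 < r := hx0
  have hFTCbound : ∀ s, s ∈ Ioo (0:ℝ) r →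
      w r ^ 2 * r ^ α ≤ w s ^ 2 * s ^ α +
        (c * (A' / sphereSurfaceMeasure N) +
         (c⁻¹ + K) * (B' / (sphereSurfaceMeasure N * lam0))) := by
    intro s hs
    have hsr : s ≤ r := hs.2.le
    have hsub : Icc s r ⊆ Ioi (0:ℝ) := fun t ht => lt_of_lt_of_le hs.1 ht.1
    have hDcont : ContinuousOn D (Icc s r) := by
      apply ContinuousOn.add
      · exact (((continuous_const.mul hwcont).mul hW'cont).continuousOn).mul
          ((hrpow_contOn α).mono hsub)
      · exact ((hwcont.pow 2).continuousOn).mul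
          (continuousOn_const.mul ((hrpow_contOn (α - 1)).mono hsub))
    have hIntD : IntervalIntegrable D volume s r := hDcont.intervalIntegrable_of_Icc hsr
    have hg1c : ContinuousOn g1 (Icc s r) := hg1cont.mono hsub
    have hg2c : ContinuousOn g2 (Icc s r) := hg2cont.mono hsub
    have hIntH : IntervalIntegrable (fun t => c * g1 t + (c⁻¹ + K) * g2 t) volume s r :=
      ((continuousOn_const.mul hg1c).add
        (continuousOn_const.mul hg2c)).intervalIntegrable_of_Icc hsr
    have hFTC : ∫ t in s..r, D t = w r ^ 2 * r ^ α - w s ^ 2 * s ^ α := by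
      have h0 := intervalIntegral.integral_eq_sub_of_hasDerivAt
        (f := fun t : ℝ => w t ^ 2 * t ^ α) (f' := D) (a := s) (b := r)
        (fun t ht => by
          rw [uIcc_of_le hsr] at ht
          exact hDeriv t (hsub ht)) hIntD
      simpa using h0
    have hmono : ∫ t in s..r, D t ≤ ∫ t in s..r, (c * g1 t + (c⁻¹ + K) * g2 t) :=
      intervalIntegral.integral_mono_on hsr hIntD hIntH (hDbound s hs)
    have hsplit : (∫ t in s..r, (c * g1 t + (c⁻¹ + K) * g2 t))
        = c * (∫ t in s..r, g1 t) + (c⁻¹ + K) * ∫ t in s..r, g2 t := by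
      rw [intervalIntegral.integral_add (f := fun t => c * g1 t) (g := fun t => (c⁻¹ + K) * g2 t)
        ((continuousOn_const.mul hg1c).intervalIntegrable_of_Icc hsr)
        ((continuousOn_const.mul hg2c).intervalIntegrable_of_Icc hsr),
        intervalIntegral.integral_const_mul, intervalIntegral.integral_const_mul]
    have hb1 := hT1 s r hs.1 hsr
    have hb2 := hT2 s r hs.1 hsr hxR.le
    have hcK : 0 ≤ c⁻¹ + K := by positivity
    have hfin : ∫ t in s..r, D t ≤ c * (A' / sphereSurfaceMeasure N) +
        (c⁻¹ + K) * (B' / (sphereSurfaceMeasure N * lam0)) := by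
      rw [hsplit] at hmono
      have h4 := add_le_add (mul_le_mul_of_nonneg_left hb1 hcpos.le)
        (mul_le_mul_of_nonneg_left hb2 hcK)
      linarith
    linarith [hFTC, hfin]
  have hkey : w r ^ 2 * r ^ α ≤
      M * (c + Rg * lam0⁻¹) * ((A' + B') / sphereSurfaceMeasure N) := by
    refine le_of_forall_pos_le_add (fun ε hε => ?_)
    obtain ⟨s, hsmem, hsε⟩ := hexists ε hε r hrpos hxR.le
    have h1 := hFTCbound s hsmem
    have h2 : c * (A' / sphereSurfaceMeasure N) +
        (c⁻¹ + K) * (B' / (sphereSurfaceMeasure N * lam0))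
        ≤ M * (c + Rg * lam0⁻¹) * ((A' + B') / sphereSurfaceMeasure N) := by
      have haσ : 0 ≤ A' / sphereSurfaceMeasure N := div_nonneg hA'nonneg hσpos.le
      have hbσ : 0 ≤ B' / sphereSurfaceMeasure N := div_nonneg hB'nonneg hσpos.le
      have hsplit2 : B' / (sphereSurfaceMeasure N * lam0)
          = (B' / sphereSurfaceMeasure N) * lam0⁻¹ := by
        rw [div_mul_eq_div_div, div_eq_mul_inv]
      have hsum : (A' + B') / sphereSurfaceMeasure N
          = A' / sphereSurfaceMeasure N + B' / sphereSurfaceMeasure N := add_div _ _ _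
      rw [hsplit2, hsum]
      set aa := A' / sphereSurfaceMeasure N with haa_def
      set bb := B' / sphereSurfaceMeasure N with hbb_def
      have hL : c * aa + (c⁻¹ + K) * (bb * lam0⁻¹)
          = c * (aa + bb) + ((N:ℝ) - 2) * Rg * (lam0⁻¹ * bb) := by
        rw [hK_def]
        have hdist : (c⁻¹ + ((N:ℝ) - 2) * Rg) * (bb * lam0⁻¹)
            = (c⁻¹ * lam0⁻¹) * bb + ((N:ℝ) - 2) * Rg * (lam0⁻¹ * bb) := by ring
        rw [hdist, hcc]
        ring
      rw [hL]
      have hab : 0 ≤ aa + bb := by linarith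
      have e1 : c * (aa + bb) ≤ M * c * (aa + bb) := by
        nlinarith [mul_nonneg (mul_nonneg (by linarith : (0:ℝ) ≤ M - 1) hcpos.le) hab]
      have e2 : ((N:ℝ) - 2) * Rg * (lam0⁻¹ * bb) ≤ M * (Rg * lam0⁻¹) * (aa + bb) := by
        nlinarith [mul_nonneg (mul_nonneg hRgpos.le hlam0inv.le)
          (mul_nonneg (by linarith : (0:ℝ) ≤ M - ((N:ℝ) - 2)) hbσ),
          mul_nonneg (mul_nonneg hRgpos.le hlam0inv.le)
          (mul_nonneg (by linarith : (0:ℝ) ≤ M) haσ)]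
      calc c * (aa + bb) + ((N:ℝ) - 2) * Rg * (lam0⁻¹ * bb)
          ≤ M * c * (aa + bb) + M * (Rg * lam0⁻¹) * (aa + bb) := add_le_add e1 e2
      _ = M * (c + Rg * lam0⁻¹) * (aa + bb) := by ring
    linarith
  -- final conversion
  have hL0 : 0 ≤ c + Rg * lam0⁻¹ := by positivity
  have hABnn : 0 ≤ A' + B' := by linarith
  have hMσ : 0 ≤ M / sphereSurfaceMeasure N := div_nonneg (by linarith) hσpos.le
  have hfinal2 : w r ^ 2 ≤
      M / sphereSurfaceMeasure N * (c + Rg * lam0⁻¹) * (A' + B') * r ^ (-α) := by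
    have h1 : w r ^ 2 = (w r ^ 2 * r ^ α) * r ^ (-α) := by
      rw [mul_assoc, ← Real.rpow_add hrpos, add_neg_cancel, Real.rpow_zero, mul_one]
    rw [h1]
    have h2 := mul_le_mul_of_nonneg_right hkey (Real.rpow_nonneg hrpos.le (-α))
    calc (w r ^ 2 * r ^ α) * r ^ (-α)
        ≤ M * (c + Rg * lam0⁻¹) * ((A' + B') / sphereSurfaceMeasure N) * r ^ (-α) := h2
    _ = M / sphereSurfaceMeasure N * (c + Rg * lam0⁻¹) * (A' + B') * r ^ (-α) := by
        ring
  have hux : |u x| = Real.sqrt (w r ^ 2) := by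
    rw [hw_eq x, Real.sqrt_sq_eq_abs]
  have hexp : r ^ (-(2 * (N:ℝ) - 2 - γ) / 4) = Real.sqrt (r ^ (-α)) := by
    rw [Real.sqrt_eq_rpow, ← Real.rpow_mul hrpos.le]
    congr 1
    rw [hα_def]
    ring
  have hsq : Real.sqrt (M / sphereSurfaceMeasure N) * Real.sqrt (c + Rg * lam0⁻¹) *
      Real.sqrt (A' + B') * Real.sqrt (r ^ (-α))
      = Real.sqrt (M / sphereSurfaceMeasure N * (c + Rg * lam0⁻¹) * (A' + B') * r ^ (-α)) := by
    rw [← Real.sqrt_mul hMσ, ← Real.sqrt_mul (mul_nonneg hMσ hL0),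
      ← Real.sqrt_mul (mul_nonneg (mul_nonneg hMσ hL0) hABnn)]
  rw [hux, hexp, hsq]
  exact Real.sqrt_le_sqrt hfinal2
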